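/- Every semi-Hausdorff topological monoid with open shifts is functionally Hausdorff. That is, if S is a topological monoid with open shifts such that for any distinct points x, y ∈ S there is a neighborhood U of x with y ∉ interior(closure(U)), then for any distinct points x, y ∈ S there is a continuous function f : S → ℝ with f x ≠ f y. -/

import Mathlib

open Topology Set Filter

namespace StmtTen

variable {X : Type*} [TopologicalSpace X]

/-- A variant of the `Urysohns.CU` structure from mathlib, adapted to a
"semiregular" Urysohn construction: we carry a pair of sets `(A, B)` related by
an abstract relation `r` which (1) can be interpolated, and (2) implies
`closure A ⊆ interior (closure B)`. -/
structure CU (r : Set X → Set X → Prop) where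
  protected A : Set X
  protected B : Set X
  protected rel : r A B
  protected clos : ∀ {a b : Set X}, r a b → closure a ⊆ interior (closure b)
  protected interp : ∀ {a b : Set X}, r a b → ∃ v, r a v ∧ r v b

namespace CU

variable {r : Set X → Set X → Prop}

/-- Left half of the interpolation. -/
noncomputable def left (c : CU r) : CU r :=
  ⟨c.A, (c.interp c.rel).choose, (c.interp c.rel).choose_spec.1, c.clos, c.interp⟩

/-- Right half of the interpolation. -/
noncomputable def right (c : CU r) : CU r :=
  ⟨(c.interp c.rel).choose, c.B, (c.interp c.rel).choose_spec.2, c.clos, c.interp⟩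

theorem left_A (c : CU r) : c.left.A = c.A := rfl
theorem right_B (c : CU r) : c.right.B = c.B := rfl
theorem left_B_eq_right_A (c : CU r) : c.left.B = c.right.A := rfl

theorem icA_subset_icB (c : CU r) :
    interior (closure c.A) ⊆ interior (closure c.B) :=
  fun _ hx => c.clos c.rel (interior_subset hx)

/-- `n`-th approximation to the Urysohn function. -/
noncomputable def approx : ℕ → CU r → X → ℝ
  | 0, c, x => indicator (interior (closure c.B))ᶜ 1 x
  | n + 1, c, x => midpoint ℝ (approx n c.left x) (approx n c.right x)

theorem approx_of_mem (c : CU r) (n : ℕ) {x : X}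
    (hx : x ∈ interior (closure c.A)) : c.approx n x = 0 := by
  induction n generalizing c with
  | zero =>
    exact indicator_of_notMem (Set.notMem_compl_iff.2 (c.icA_subset_icB hx)) _
  | succ n ihn =>
    simp only [approx]
    rw [ihn c.left hx, ihn c.right (c.left.icA_subset_icB hx), midpoint_self]

theorem approx_of_nmem (c : CU r) (n : ℕ) {x : X}
    (hx : x ∉ interior (closure c.B)) : c.approx n x = 1 := by
  induction n generalizing c with
  | zero =>
    rw [← mem_compl_iff] at hx
    exact indicator_of_mem hx _
  | succ n ihn =>
    simp only [approx]
    rw [ihn c.left (fun h => hx (c.right.icA_subset_icB h)), ihn c.right hx, midpoint_self]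

theorem approx_nonneg (c : CU r) (n : ℕ) (x : X) : 0 ≤ c.approx n x := by
  induction n generalizing c with
  | zero => exact indicator_nonneg (fun _ _ => zero_le_one) _
  | succ n ihn =>
    simp only [approx, midpoint_eq_smul_add, invOf_eq_inv]
    refine mul_nonneg (inv_nonneg.2 zero_le_two) (add_nonneg ?_ ?_) <;> apply ihn

theorem approx_le_one (c : CU r) (n : ℕ) (x : X) : c.approx n x ≤ 1 := by
  induction n generalizing c with
  | zero => exact indicator_apply_le' (fun _ => le_rfl) fun _ => zero_le_one
  | succ n ihn =>
    simp only [approx, midpoint_eq_smul_add, invOf_eq_inv, smul_eq_mul, ← div_eq_inv_mul]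
    have := add_le_add (ihn (left c)) (ihn (right c))
    norm_num at this
    exact Iff.mpr (div_le_one zero_lt_two) this

theorem bddAbove_range_approx (c : CU r) (x : X) :
    BddAbove (range fun n => c.approx n x) :=
  ⟨1, fun _ ⟨n, hn⟩ => hn ▸ c.approx_le_one n x⟩

theorem approx_le_approx_of_sub {c₁ c₂ : CU r}
    (h : interior (closure c₁.B) ⊆ interior (closure c₂.A)) (n₁ n₂ : ℕ) (x : X) :
    c₂.approx n₂ x ≤ c₁.approx n₁ x := by
  by_cases hx : x ∈ interior (closure c₁.B)
  · calc
      approx n₂ c₂ x = 0 := approx_of_mem _ _ (h hx)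
      _ ≤ approx n₁ c₁ x := approx_nonneg _ _ _
  · calc
      approx n₂ c₂ x ≤ 1 := approx_le_one _ _ _
      _ = approx n₁ c₁ x := (approx_of_nmem _ _ hx).symm

theorem approx_mem_Icc_right_left (c : CU r) (n : ℕ) (x : X) :
    c.approx n x ∈ Icc (c.right.approx n x) (c.left.approx n x) := by
  induction' n with n ihn generalizing c
  · refine ⟨le_of_eq rfl, ?_⟩
    exact indicator_le_indicator_of_subset
      (compl_subset_compl.2 c.right.icA_subset_icB) (fun _ => zero_le_one) _
  · simp only [approx, mem_Icc]
    refine ⟨midpoint_le_midpoint ?_ (ihn _).1, midpoint_le_midpoint (ihn _).2 ?_⟩ <;>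
      exact approx_le_approx_of_sub (subset_refl _) _ _ _

theorem approx_le_succ (c : CU r) (n : ℕ) (x : X) :
    c.approx n x ≤ c.approx (n + 1) x := by
  induction' n with n ihn generalizing c
  · show c.approx 0 x ≤ midpoint ℝ (c.left.approx 0 x) (c.right.approx 0 x)
    have h0 : c.right.approx 0 x = c.approx 0 x := rfl
    rw [← h0, right_le_midpoint]
    exact (c.approx_mem_Icc_right_left 0 x).1.trans (c.approx_mem_Icc_right_left 0 x).2
  · rw [approx, approx]
    exact midpoint_le_midpoint (ihn _) (ihn _)

theorem approx_mono (c : CU r) (x : X) : Monotone fun n => c.approx n x :=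
  monotone_nat_of_le_succ fun n => c.approx_le_succ n x

/-- The limit of the approximations: the Urysohn function. -/
protected noncomputable def lim (c : CU r) (x : X) : ℝ :=
  ⨆ n, c.approx n x

theorem tendsto_approx_atTop (c : CU r) (x : X) :
    Tendsto (fun n => c.approx n x) atTop (𝓝 <| c.lim x) :=
  tendsto_atTop_ciSup (c.approx_mono x) ⟨1, fun _ ⟨_, hn⟩ => hn ▸ c.approx_le_one _ _⟩

theorem lim_of_mem (c : CU r) (x : X) (h : x ∈ interior (closure c.A)) : c.lim x = 0 := by
  simp only [CU.lim, approx_of_mem, h, ciSup_const]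

theorem lim_of_nmem (c : CU r) (x : X) (h : x ∉ interior (closure c.B)) : c.lim x = 1 := by
  simp only [CU.lim, approx_of_nmem c _ h, ciSup_const]

theorem lim_eq_midpoint (c : CU r) (x : X) :
    c.lim x = midpoint ℝ (c.left.lim x) (c.right.lim x) := by
  refine tendsto_nhds_unique (c.tendsto_approx_atTop x) ((tendsto_add_atTop_iff_nat 1).1 ?_)
  simp only [approx]
  exact (c.left.tendsto_approx_atTop x).midpoint (c.right.tendsto_approx_atTop x)

theorem approx_le_lim (c : CU r) (x : X) (n : ℕ) : c.approx n x ≤ c.lim x :=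
  le_ciSup (c.bddAbove_range_approx x) _

theorem lim_nonneg (c : CU r) (x : X) : 0 ≤ c.lim x :=
  (c.approx_nonneg 0 x).trans (c.approx_le_lim x 0)

theorem lim_le_one (c : CU r) (x : X) : c.lim x ≤ 1 :=
  ciSup_le fun _ => c.approx_le_one _ _

theorem lim_mem_Icc (c : CU r) (x : X) : c.lim x ∈ Icc (0 : ℝ) 1 :=
  ⟨c.lim_nonneg x, c.lim_le_one x⟩

/-- Continuity of the Urysohn function. -/
theorem continuous_lim (c : CU r) : Continuous c.lim := by
  obtain ⟨h0, h1234, h1⟩ : 0 < (2⁻¹ : ℝ) ∧ (2⁻¹ : ℝ) < 3 / 4 ∧ (3 / 4 : ℝ) < 1 := by norm_num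
  refine
    continuous_iff_continuousAt.2 fun x =>
      (Metric.nhds_basis_closedBall_pow (h0.trans h1234) h1).tendsto_right_iff.2 fun n _ => ?_
  simp only [Metric.mem_closedBall]
  induction' n with n ihn generalizing c
  · filter_upwards with y
    rw [pow_zero]
    exact Real.dist_le_of_mem_Icc_01 (c.lim_mem_Icc _) (c.lim_mem_Icc _)
  · by_cases hxl : x ∈ interior (closure c.left.B)
    · filter_upwards [IsOpen.mem_nhds isOpen_interior hxl, ihn c.left] with y hyl hyd
      have hy0 : c.right.lim y = 0 := c.right.lim_of_mem _ hyl
      have hx0 : c.right.lim x = 0 := c.right.lim_of_mem _ hxl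
      rw [pow_succ', c.lim_eq_midpoint, c.lim_eq_midpoint, hy0, hx0]
      refine (dist_midpoint_midpoint_le _ _ _ _).trans ?_
      rw [dist_self, add_zero, div_eq_inv_mul]
      gcongr
    · have hsub : closure c.left.left.B ⊆ interior (closure c.left.B) :=
        c.clos c.left.right.rel
      have hxl' : x ∈ (closure c.left.left.B)ᶜ := fun h => hxl (hsub h)
      filter_upwards [IsOpen.mem_nhds (isOpen_compl_iff.2 isClosed_closure) hxl',
        ihn c.left.right, ihn c.right] with y hyl hydl hydr
      have hx1 : x ∉ interior (closure c.left.left.B) := fun h => hxl' (interior_subset h)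
      have hy1 : y ∉ interior (closure c.left.left.B) := fun h => hyl (interior_subset h)
      simp only [pow_succ, c.lim_eq_midpoint, c.left.lim_eq_midpoint,
        c.left.left.lim_of_nmem _ hx1, c.left.left.lim_of_nmem _ hy1]
      refine (dist_midpoint_midpoint_le _ _ _ _).trans ?_
      refine (div_le_div_of_nonneg_right (add_le_add (dist_midpoint_midpoint_le _ _ _ _) le_rfl)
        zero_le_two).trans ?_
      rw [dist_self, zero_add]
      set R := (3 / 4 : ℝ) ^ n
      calc _ ≤ (R / 2 + R) / 2 := by gcongr
        _ = _ := by field_simp; ring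

end CU

end StmtTen

section Monoid

variable {S : Type*} [Monoid S] [TopologicalSpace S] [ContinuousMul S]

/-- The interpolation relation: `a` can be fattened on both sides by a
neighborhood of `1` while staying within `b`. -/
def StmtTenRel (a b : Set S) : Prop :=
  ∃ O : Set S, IsOpen O ∧ (1 : S) ∈ O ∧ ∀ p ∈ O, ∀ t ∈ a, ∀ q ∈ O, p * t * q ∈ b

theorem stmtTenRel_clos (hshift : ∀ a b : S, IsOpenMap fun x : S => a * x * b)
    {a b : Set S} (h : StmtTenRel a b) : closure a ⊆ interior (closure b) := by
  obtain ⟨O, hO, h1, hOab⟩ := h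
  intro t ht
  set V : Set S := ⋃ p ∈ O, (fun q => p * t * q) '' O with hV
  have hVopen : IsOpen V := by
    refine isOpen_biUnion fun p _ => ?_
    have := (hshift (p * t) 1) O hO
    have heq : (fun x : S => p * t * x * 1) '' O = (fun q => p * t * q) '' O := by
      apply image_congr
      intro q _
      simp [mul_one]
    rwa [heq] at this
  have htV : t ∈ V := by
    refine mem_biUnion h1 ⟨1, h1, ?_⟩
    simp
  have hVb : V ⊆ closure b := by
    rintro s hs
    simp only [hV, mem_iUnion, mem_image] at hs
    obtain ⟨p, hp, q, hq, rfl⟩ := hs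
    rw [mem_closure_iff]
    intro M hM hsM
    have hcont : Continuous fun z : S => p * z * q := by fun_prop
    have hN : IsOpen ((fun z : S => p * z * q) ⁻¹' M) := hM.preimage hcont
    have htN : t ∈ (fun z : S => p * z * q) ⁻¹' M := hsM
    obtain ⟨u, huN, hua⟩ := mem_closure_iff.1 ht _ hN htN
    exact ⟨p * u * q, huN, hOab p hp u hua q hq⟩
  exact interior_maximal hVb hVopen htV

theorem stmtTenRel_interp (hshift : ∀ a b : S, IsOpenMap fun x : S => a * x * b)
    {a b : Set S} (h : StmtTenRel a b) :
    ∃ v, StmtTenRel a v ∧ StmtTenRel v b := by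
  obtain ⟨O, hO, h1, hOab⟩ := h
  obtain ⟨O', hO'open, h1', hO'O⟩ := exists_open_nhds_one_mul_subset (hO.mem_nhds h1)
  refine ⟨⋃ p ∈ O', ⋃ q ∈ O', (fun t => p * t * q) '' a, ⟨O', hO'open, h1', ?_⟩,
    ⟨O', hO'open, h1', ?_⟩⟩
  · intro p hp t ht q hq
    exact mem_biUnion hp (mem_biUnion hq ⟨t, ht, rfl⟩)
  · intro p hp s hs q hq
    simp only [mem_iUnion, mem_image] at hs
    obtain ⟨p', hp', q', hq', t, ht, rfl⟩ := hs
    have e : p * (p' * t * q') * q = (p * p') * t * (q' * q) := by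
      simp only [mul_assoc]
    rw [e]
    exact hOab _ (hO'O (Set.mul_mem_mul hp hp')) _ ht _ (hO'O (Set.mul_mem_mul hq' hq))

end Monoid

theorem functionallyHausdorff_of_semiHausdorff_monoid {S : Type*} [Monoid S]
    [TopologicalSpace S] [ContinuousMul S]
    (hshift : ∀ a b : S, IsOpenMap fun x : S => a * x * b)
    (hsh : ∀ x y : S, x ≠ y → ∃ U ∈ 𝓝 x, y ∉ interior (closure U)) :
    ∀ x y : S, x ≠ y → ∃ f : S → ℝ, Continuous f ∧ f x ≠ f y := by
  intro x y hxy
  obtain ⟨U, hU, hyU⟩ := hsh x y hxy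
  set U' : Set S := interior U with hU'
  have hxU' : x ∈ U' := mem_interior_iff_mem_nhds.2 hU
  -- find `A` a neighborhood of `x` and `O` a neighborhood of `1` with `O * A * O ⊆ U'`
  have hcont : Continuous fun z : S × S × S => z.1 * z.2.1 * z.2.2 := by fun_prop
  have hF : (fun z : S × S × S => z.1 * z.2.1 * z.2.2) ⁻¹' U' ∈ 𝓝 ((1 : S), x, (1 : S)) := by
    apply hcont.continuousAt.preimage_mem_nhds
    rw [one_mul, mul_one]
    exact isOpen_interior.mem_nhds hxU'
  rw [mem_nhds_prod_iff] at hF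
  obtain ⟨u, hu, w, hw, huw⟩ := hF
  rw [mem_nhds_prod_iff] at hw
  obtain ⟨nn, hnn, o, ho, hno⟩ := hw
  set O : Set S := interior u ∩ interior o with hOdef
  set A : Set S := interior nn with hAdef
  have hrel : StmtTenRel A U' := by
    refine ⟨O, isOpen_interior.inter isOpen_interior,
      ⟨mem_interior_iff_mem_nhds.2 hu, mem_interior_iff_mem_nhds.2 ho⟩, ?_⟩
    intro p hp t ht q hq
    exact huw (Set.mk_mem_prod (interior_subset hp.1)
      (hno (Set.mk_mem_prod (interior_subset ht) (interior_subset hq.2))))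
  set c : StmtTen.CU (StmtTenRel (S := S)) :=
    ⟨A, U', hrel, fun {a b} h => stmtTenRel_clos hshift h,
      fun {a b} h => stmtTenRel_interp hshift h⟩ with hc
  refine ⟨c.lim, c.continuous_lim, ?_⟩
  have hfx : c.lim x = 0 := by
    apply c.lim_of_mem
    exact interior_maximal subset_closure isOpen_interior (mem_interior_iff_mem_nhds.2 hnn)
  have hfy : c.lim y = 1 := by
    apply c.lim_of_nmem
    intro hmem
    exact hyU (interior_mono (closure_mono interior_subset) hmem)
  rw [hfx, hfy]
  norm_num
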